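/- For γ > 0 and 0 < a < b, lim_{n→∞} ∑_{s=⌊an⌋}^{⌊bn⌋-1} s^{-1} ∏_{j=s+1}^{⌊bn⌋-1}(1 - γ/j) = γ^{-1}(1 - (a/b)^γ). -/

import Mathlib

open Filter Finset Real Topology

lemma tele (γ : ℝ) (hγ : γ ≠ 0) (A B : ℕ) (hA : 1 ≤ A) :
    ∑ s ∈ Finset.Ico A B, ((s:ℝ))⁻¹ * ∏ j ∈ Finset.Ico (s+1) B, (1 - γ / (j:ℝ))
    = γ⁻¹ * (1 - ∏ j ∈ Finset.Ico A B, (1 - γ / (j:ℝ))) := by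
  rcases le_or_gt B A with h | h
  · rw [Finset.Ico_eq_empty (Nat.not_lt.2 h)]
    simp
  set f : ℕ → ℝ := fun s => ∏ j ∈ Finset.Ico s B, (1 - γ / (j:ℝ)) with hf
  have key : ∀ s ∈ Finset.Ico A B,
      ((s:ℝ))⁻¹ * ∏ j ∈ Finset.Ico (s+1) B, (1 - γ / (j:ℝ)) = γ⁻¹ * (f (s+1) - f s) := by
    intro s hs
    rw [Finset.mem_Ico] at hs
    have hs1 : 1 ≤ s := le_trans hA hs.1
    have hfs : f s = (1 - γ / (s:ℝ)) * f (s+1) := by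
      rw [hf]
      exact Finset.prod_eq_prod_Ico_succ_bot hs.2 _
    rw [hfs, hf]
    have hs0 : (s:ℝ) ≠ 0 := Nat.cast_ne_zero.2 (by omega)
    field_simp
    ring
  rw [Finset.sum_congr rfl key, ← Finset.mul_sum]
  congr 1
  have : ∑ s ∈ Finset.Ico A B, (f (s+1) - f s) = f B - f A := by
    rw [Finset.sum_Ico_eq_sub _ h.le, Finset.sum_range_sub, Finset.sum_range_sub]
    ring
  rw [this, hf]
  simp


lemma logbound {x : ℝ} (h2 : x ≤ 1/2) (hx1 : 0 < 1 - x) : |Real.log (1-x) + x| ≤ 2*x^2 := by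
  have h1 : Real.log (1-x) ≤ -x := by
    have := Real.log_le_sub_one_of_pos hx1
    linarith
  have h2' : -Real.log (1-x) ≤ x/(1-x) := by
    have hinv : (0:ℝ) < (1-x)⁻¹ := by positivity
    have h := Real.log_le_sub_one_of_pos hinv
    rw [Real.log_inv] at h
    have heq : (1-x)⁻¹ - 1 = x/(1-x) := by field_simp; ring
    linarith [heq ▸ h]
  have h3 : x/(1-x) ≤ x + 2*x^2 := by
    rw [div_le_iff₀ hx1]
    nlinarith
  rw [abs_le]
  constructor <;> nlinarith

lemma harm_asymp : Tendsto (fun m : ℕ => (∑ j ∈ Finset.Ico 1 m, ((j:ℝ))⁻¹) - Real.log m)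
    atTop (𝓝 Real.eulerMascheroniConstant) := by
  have h := Real.tendsto_harmonic_sub_log_add_one.comp (tendsto_sub_atTop_nat 1)
  apply h.congr'
  filter_upwards [eventually_ge_atTop 1] with m hm
  have h1 : ((harmonic (m-1) : ℝ)) = ∑ j ∈ Finset.Ico 1 m, ((j:ℝ))⁻¹ := by
    rw [harmonic_eq_sum_Icc]
    push_cast
    rw [← Finset.Ico_add_one_right_eq_Icc, show m - 1 + 1 = m from by omega]
  have h2 : ((m - 1 : ℕ) : ℝ) + 1 = (m : ℝ) := by
    have : ((m - 1 : ℕ) : ℝ) = (m:ℝ) - 1 := by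
      have := Nat.cast_sub hm (R := ℝ); simpa using this
    rw [this]; ring
  simp only [Function.comp_apply, h1, h2]

lemma prodlim (γ a b : ℝ) (hγ : 0 < γ) (ha : 0 < a) (hab : a < b) :
    Tendsto (fun n : ℕ => ∏ j ∈ Finset.Ico ⌊a * (n:ℝ)⌋₊ ⌊b * (n:ℝ)⌋₊, (1 - γ / (j:ℝ)))
      atTop (𝓝 ((a/b) ^ γ)) := by
  have hb : 0 < b := ha.trans hab
  set A : ℕ → ℕ := fun n => ⌊a * (n:ℝ)⌋₊ with hA
  set B : ℕ → ℕ := fun n => ⌊b * (n:ℝ)⌋₊ with hB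
  have hAA : Tendsto A atTop atTop := tendsto_nat_floor_mul_atTop a ha
  have hBB : Tendsto B atTop atTop := tendsto_nat_floor_mul_atTop b hb
  have hAdiv : Tendsto (fun n : ℕ => (A n : ℝ) / n) atTop (𝓝 a) :=
    (tendsto_nat_floor_mul_div_atTop ha.le).comp tendsto_natCast_atTop_atTop
  have hBdiv : Tendsto (fun n : ℕ => (B n : ℝ) / n) atTop (𝓝 b) :=
    (tendsto_nat_floor_mul_div_atTop hb.le).comp tendsto_natCast_atTop_atTop
  -- eventual basic facts
  have hev : ∀ᶠ n : ℕ in atTop, 1 ≤ A n ∧ A n ≤ B n ∧ (2*γ ≤ (A n : ℝ)) ∧ 1 ≤ n := by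
    filter_upwards [hAA.eventually_ge_atTop 1, hAA.eventually_ge_atTop (⌈2*γ⌉₊ ),
      eventually_ge_atTop 1] with n h1 h2 h3
    refine ⟨h1, Nat.floor_mono ?_, ?_, h3⟩
    · have : (0:ℝ) ≤ (n:ℝ) := Nat.cast_nonneg n
      nlinarith
    · calc 2*γ ≤ (⌈2*γ⌉₊ : ℝ) := Nat.le_ceil _
        _ ≤ (A n : ℝ) := Nat.cast_le.2 h2
  -- ratio limit
  have hratio : Tendsto (fun n : ℕ => (B n : ℝ) / (A n : ℝ)) atTop (𝓝 (b/a)) := by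
    have h := hBdiv.div hAdiv ha.ne'
    apply h.congr'
    filter_upwards [hev] with n ⟨h1, _, _, h4⟩
    have hn0 : (n:ℝ) ≠ 0 := Nat.cast_ne_zero.2 (by omega)
    have hA0 : (A n : ℝ) ≠ 0 := Nat.cast_ne_zero.2 (by omega)
    simp only [Pi.div_apply]
    field_simp
  -- harmonic sum limit
  set S : ℕ → ℝ := fun m => ∑ j ∈ Finset.Ico 1 m, ((j:ℝ))⁻¹ with hS
  have Hlim : Tendsto (fun n : ℕ => ∑ j ∈ Finset.Ico (A n) (B n), ((j:ℝ))⁻¹)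
      atTop (𝓝 (Real.log (b/a))) := by
    have t1 : Tendsto (fun n : ℕ => (S (B n) - Real.log (B n))
        - (S (A n) - Real.log (A n)) + Real.log ((B n : ℝ) / (A n : ℝ)))
        atTop (𝓝 (Real.eulerMascheroniConstant - Real.eulerMascheroniConstant
          + Real.log (b/a))) := by
      exact (((harm_asymp.comp hBB).sub (harm_asymp.comp hAA)).add
        (((Real.continuousAt_log (by positivity : (b/a : ℝ) ≠ 0)).tendsto).comp hratio))
    rw [show Real.eulerMascheroniConstant - Real.eulerMascheroniConstant
        + Real.log (b/a) = Real.log (b/a) by ring] at t1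
    apply t1.congr'
    filter_upwards [hev] with n ⟨h1, h2, _, _⟩
    have hA0 : (A n : ℝ) ≠ 0 := Nat.cast_ne_zero.2 (by omega)
    have hB0 : (B n : ℝ) ≠ 0 := Nat.cast_ne_zero.2 (by omega)
    have hcons : S (A n) + ∑ j ∈ Finset.Ico (A n) (B n), ((j:ℝ))⁻¹ = S (B n) := by
      rw [hS]
      exact Finset.sum_Ico_consecutive _ h1 h2
    rw [Real.log_div hB0 hA0]
    linarith
  -- error sum limit
  have Elim : Tendsto (fun n : ℕ => ∑ j ∈ Finset.Ico (A n) (B n),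
      (Real.log (1 - γ/(j:ℝ)) + γ/(j:ℝ))) atTop (𝓝 0) := by
    apply squeeze_zero_norm' (a := fun n : ℕ => (B n : ℝ) * (2*γ^2) / (A n : ℝ)^2 )
    · filter_upwards [hev] with n ⟨h1, h2, h3, _⟩
      have hApos : (0:ℝ) < (A n : ℝ) := by
        exact_mod_cast Nat.pos_of_ne_zero (by omega)
      calc ‖∑ j ∈ Finset.Ico (A n) (B n), (Real.log (1 - γ/(j:ℝ)) + γ/(j:ℝ))‖
          ≤ ∑ j ∈ Finset.Ico (A n) (B n), ‖Real.log (1 - γ/(j:ℝ)) + γ/(j:ℝ)‖ :=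
            norm_sum_le _ _
        _ ≤ ∑ j ∈ Finset.Ico (A n) (B n), 2*γ^2/(A n : ℝ)^2 := by
            apply Finset.sum_le_sum
            intro j hj
            rw [Finset.mem_Ico] at hj
            have hjA : (A n : ℝ) ≤ (j : ℝ) := Nat.cast_le.2 hj.1
            have hjpos : (0:ℝ) < (j:ℝ) := lt_of_lt_of_le hApos hjA
            have hx2 : γ/(j:ℝ) ≤ 1/2 := by
              rw [div_le_iff₀ hjpos]
              nlinarith
            have hx1 : 0 < 1 - γ/(j:ℝ) := by linarith
            have hbd := logbound hx2 hx1
            rw [Real.norm_eq_abs]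
            refine hbd.trans ?_
            have hle : (A n : ℝ)^2 ≤ (j:ℝ)^2 := by nlinarith
            calc 2*(γ/(j:ℝ))^2 = 2*γ^2/(j:ℝ)^2 := by rw [div_pow]; ring
              _ ≤ 2*γ^2/(A n:ℝ)^2 := by
                  apply div_le_div_of_nonneg_left (by positivity) (by positivity) hle
        _ = ((B n - A n : ℕ) : ℝ) * (2*γ^2/(A n:ℝ)^2) := by
            rw [Finset.sum_const, Nat.card_Ico]
            simp [nsmul_eq_mul]
        _ ≤ (B n : ℝ) * (2*γ^2) / (A n : ℝ)^2 := by
            have hc : ((B n - A n : ℕ) : ℝ) ≤ (B n : ℝ) := by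
              exact_mod_cast Nat.sub_le _ _
            calc ((B n - A n : ℕ) : ℝ) * (2*γ^2/(A n:ℝ)^2)
                ≤ (B n : ℝ) * (2*γ^2/(A n:ℝ)^2) :=
                  mul_le_mul_of_nonneg_right hc (by positivity)
              _ = (B n : ℝ) * (2*γ^2) / (A n : ℝ)^2 := by ring
    · have t2 : Tendsto (fun n : ℕ => ((B n : ℝ)/n) * (2*γ^2) / ((A n : ℝ)/n)^2 * (1/(n:ℝ)))
          atTop (𝓝 (b * (2*γ^2) / a^2 * 0)) := by
        exact (((hBdiv.mul tendsto_const_nhds).div (hAdiv.pow 2) (by positivity)).mul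
          (tendsto_one_div_atTop_nhds_zero_nat))
      rw [mul_zero] at t2
      apply t2.congr'
      filter_upwards [hev] with n ⟨h1, _, _, h4⟩
      have hn0 : (n:ℝ) ≠ 0 := Nat.cast_ne_zero.2 (by omega)
      have hA0 : (A n : ℝ) ≠ 0 := Nat.cast_ne_zero.2 (by omega)
      field_simp
  -- log sum limit
  have Llim : Tendsto (fun n : ℕ => ∑ j ∈ Finset.Ico (A n) (B n), Real.log (1 - γ/(j:ℝ)))
      atTop (𝓝 (γ * Real.log (a/b))) := by
    have t3 := Elim.sub (Hlim.const_mul γ)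
    rw [zero_sub] at t3
    have heq : -(γ * Real.log (b/a)) = γ * Real.log (a/b) := by
      rw [Real.log_div hb.ne' ha.ne', Real.log_div ha.ne' hb.ne']
      ring
    rw [heq] at t3
    apply t3.congr
    intro n
    rw [Finset.sum_add_distrib, Finset.mul_sum]
    simp only [div_eq_mul_inv]
    ring_nf
  -- conclude
  have hfin := (Real.continuous_exp.tendsto _).comp Llim
  rw [show Real.exp (γ * Real.log (a/b)) = (a/b)^γ by
    rw [Real.rpow_def_of_pos (by positivity), mul_comm]] at hfin
  apply hfin.congr'
  filter_upwards [hev] with n ⟨h1, h2, h3, _⟩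
  have hApos : (0:ℝ) < (A n : ℝ) := by exact_mod_cast Nat.pos_of_ne_zero (by omega)
  rw [Function.comp_apply, Real.exp_sum]
  apply Finset.prod_congr rfl
  intro j hj
  rw [Finset.mem_Ico] at hj
  have hjA : (A n : ℝ) ≤ (j : ℝ) := Nat.cast_le.2 hj.1
  have hjpos : (0:ℝ) < (j:ℝ) := lt_of_lt_of_le hApos hjA
  have hx2 : γ/(j:ℝ) ≤ 1/2 := by
    rw [div_le_iff₀ hjpos]; nlinarith
  exact Real.exp_log (by linarith)

theorem stmt10 (γ a b : ℝ) (hγ : 0 < γ) (ha : 0 < a) (hab : a < b) :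
    Tendsto (fun n : ℕ =>
        ∑ s ∈ Finset.Ico ⌊a * (n:ℝ)⌋₊ ⌊b * (n:ℝ)⌋₊,
          ((s:ℝ))⁻¹ * ∏ j ∈ Finset.Icc (s+1) (⌊b * (n:ℝ)⌋₊ - 1), (1 - γ / (j:ℝ)))
      atTop (nhds (γ⁻¹ * (1 - (a/b) ^ γ))) := by
  have hb : 0 < b := ha.trans hab
  have hq := prodlim γ a b hγ ha hab
  have hfin := ((tendsto_const_nhds (x := (1:ℝ))).sub hq).const_mul γ⁻¹
  apply hfin.congr'
  have hAA := tendsto_nat_floor_mul_atTop a ha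
  have hBB := tendsto_nat_floor_mul_atTop b hb
  filter_upwards [hAA.eventually_ge_atTop 1, hBB.eventually_ge_atTop 1] with n h1 hB1
  rw [← tele γ hγ.ne' _ _ h1]
  apply Finset.sum_congr rfl
  intro s hs
  congr 1
  rw [← Finset.Ico_add_one_right_eq_Icc, show ⌊b*(n:ℝ)⌋₊ - 1 + 1 = ⌊b*(n:ℝ)⌋₊ from by omega]
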